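/- Let k ≥ 2. Each of the sequences (1^k,2^k,3^k,4^k) on 4k terms, (1^k,2^k,3^k,4^{k+1}) on 4k+1 terms, (1^k,2^{k−1},3^k,4^k) on 4k−1 terms, (1^k,2^{k+1},3^k,4^{k+1}) and (1^{k+1},2^k,3^{k+1},4^k) on 4k+2 terms is graphical, i.e., is the degree sequence of a simple graph. -/

import Mathlib

open Finset

/-- The degree of a vertex: the number of its neighbors. -/
noncomputable def deg {n : ℕ} (G : SimpleGraph (Fin n)) (v : Fin n) : ℕ :=
  Nat.card {u | G.Adj v u}

/-- A multiset of natural numbers is graphical if it is the degree sequence of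
some simple graph. -/
def IsGraphical (D : Multiset ℕ) : Prop :=
  ∃ (m : ℕ) (G : SimpleGraph (Fin m)), Multiset.map (deg G) Finset.univ.val = D

/-- The multiset `(1^{a₁}, 2^{a₂}, 3^{a₃}, 4^{a₄})`. -/
def degMultiset (a₁ a₂ a₃ a₄ : ℕ) : Multiset ℕ :=
  Multiset.replicate a₁ 1 + Multiset.replicate a₂ 2 +
    Multiset.replicate a₃ 3 + Multiset.replicate a₄ 4

lemma deg_eq_degree {n : ℕ} (G : SimpleGraph (Fin n)) [DecidableRel G.Adj] (v : Fin n) :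
    deg G v = G.degree v := by
  rw [deg, Nat.card_eq_fintype_card, ← SimpleGraph.card_neighborSet_eq_degree]
  exact Fintype.card_congr (Equiv.refl _)

lemma graphical_of_graph {n : ℕ} (G : SimpleGraph (Fin n)) [DecidableRel G.Adj]
    (D : Multiset ℕ) (h : Multiset.map (fun v => G.degree v) Finset.univ.val = D) :
    IsGraphical D := by
  refine ⟨n, G, ?_⟩
  rw [← h]
  exact Multiset.map_congr rfl (fun v _ => deg_eq_degree G v)

def graphOfList {n : ℕ} (l : List (Fin n × Fin n)) : SimpleGraph (Fin n) :=
  SimpleGraph.fromRel (fun i j => (i, j) ∈ l)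

instance {n : ℕ} (l : List (Fin n × Fin n)) : DecidableRel (graphOfList l).Adj :=
  fun a b => inferInstanceAs (Decidable (a ≠ b ∧ ((a,b) ∈ l ∨ (b,a) ∈ l)))

lemma baseA2 : IsGraphical (degMultiset 2 2 2 2) :=
  graphical_of_graph (graphOfList ([(6,7), (6,4), (6,5), (6,2), (7,4), (7,5), (7,3), (4,5), (3,2), (0,1)] : List (Fin 8 × Fin 8))) _ (by decide)

lemma baseA3 : IsGraphical (degMultiset 3 3 3 3) :=
  graphical_of_graph (graphOfList ([(9,10), (9,11), (9,6), (9,7), (10,11), (10,8), (10,6), (11,8), (11,7), (3,4), (3,5), (4,5), (8,7), (6,0), (1,2)] : List (Fin 12 × Fin 12))) _ (by decide)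

lemma baseB2 : IsGraphical (degMultiset 2 2 2 3) :=
  graphical_of_graph (graphOfList ([(6,7), (6,8), (6,4), (6,5), (7,8), (7,4), (7,5), (8,2), (8,3), (2,3), (4,5), (0,1)] : List (Fin 9 × Fin 9))) _ (by decide)

lemma baseB3 : IsGraphical (degMultiset 3 3 3 4) :=
  graphical_of_graph (graphOfList ([(9,10), (9,11), (9,12), (9,6), (10,11), (10,12), (10,7), (8,11), (8,12), (8,7), (6,3), (6,4), (5,3), (5,4), (11,12), (7,0), (1,2)] : List (Fin 13 × Fin 13))) _ (by decide)

lemma baseC2 : IsGraphical (degMultiset 2 1 2 2) :=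
  graphical_of_graph (graphOfList ([(5,6), (5,3), (5,4), (5,2), (6,3), (6,4), (6,2), (3,4), (0,1)] : List (Fin 7 × Fin 7))) _ (by decide)

lemma baseC3 : IsGraphical (degMultiset 3 2 3 3) :=
  graphical_of_graph (graphOfList ([(8,9), (8,10), (8,5), (8,6), (9,10), (9,7), (9,5), (10,7), (10,6), (3,4), (3,7), (4,6), (5,0), (1,2)] : List (Fin 11 × Fin 11))) _ (by decide)

lemma baseD2 : IsGraphical (degMultiset 2 3 2 3) :=
  graphical_of_graph (graphOfList ([(7,8), (7,9), (7,5), (7,6), (8,9), (8,5), (8,6), (9,2), (9,3), (4,2), (4,3), (5,6), (0,1)] : List (Fin 10 × Fin 10))) _ (by decide)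

lemma baseD3 : IsGraphical (degMultiset 3 4 3 4) :=
  graphical_of_graph (graphOfList ([(10,11), (10,12), (10,13), (10,7), (11,12), (11,13), (11,8), (9,12), (9,13), (9,8), (7,3), (7,4), (5,6), (5,3), (6,4), (12,13), (8,0), (1,2)] : List (Fin 14 × Fin 14))) _ (by decide)

lemma baseE2 : IsGraphical (degMultiset 3 2 3 2) :=
  graphical_of_graph (graphOfList ([(8,9), (8,5), (8,6), (8,7), (9,5), (9,6), (9,7), (3,4), (3,5), (4,6), (7,0), (1,2)] : List (Fin 10 × Fin 10))) _ (by decide)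

lemma baseE3 : IsGraphical (degMultiset 4 3 4 3) :=
  graphical_of_graph (graphOfList ([(11,12), (11,13), (11,7), (11,8), (12,13), (12,9), (12,10), (13,9), (13,10), (7,8), (7,4), (5,6), (5,8), (6,4), (9,10), (0,1), (2,3)] : List (Fin 14 × Fin 14))) _ (by decide)


/-- Disjoint union of two simple graphs. -/
def sumGraph {α β : Type} (G : SimpleGraph α) (H : SimpleGraph β) : SimpleGraph (α ⊕ β) where
  Adj x y := match x, y with
    | .inl a, .inl b => G.Adj a b
    | .inr a, .inr b => H.Adj a b
    | _, _ => False
  symm := ⟨by rintro (a|a) (b|b) h; exacts [G.adj_symm h, h.elim, h.elim, H.adj_symm h]⟩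
  loopless := ⟨by rintro (a|a) h; exacts [G.irrefl h, H.irrefl h]⟩

lemma isGraphical_univ {V : Type} [Fintype V] (G : SimpleGraph V) :
    IsGraphical (Multiset.map (fun v => Nat.card {u | G.Adj v u}) Finset.univ.val) := by
  classical
  let e := Fintype.equivFin V
  refine ⟨Fintype.card V, SimpleGraph.comap e.symm G, ?_⟩
  have huniv : (Finset.univ.val : Multiset (Fin (Fintype.card V)))
      = Multiset.map e Finset.univ.val := by
    rw [← Finset.map_univ_equiv e]; rfl
  rw [huniv, Multiset.map_map]
  refine Multiset.map_congr rfl (fun v _ => ?_)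
  show deg _ (e v) = Nat.card {u | G.Adj v u}
  unfold deg
  have hset : {u | (SimpleGraph.comap e.symm G).Adj (e v) u} = ⇑e '' {u | G.Adj v u} := by
    ext u
    simp [SimpleGraph.comap, Set.mem_image, Equiv.symm_apply_apply]
  rw [hset, Nat.card_image_of_injective e.injective]

lemma IsGraphical.add {D E : Multiset ℕ} (hD : IsGraphical D) (hE : IsGraphical E) :
    IsGraphical (D + E) := by
  obtain ⟨m, G, rfl⟩ := hD
  obtain ⟨m', H, rfl⟩ := hE
  have h := isGraphical_univ (sumGraph G H)
  rw [← Finset.univ_disjSum_univ, Finset.val_disjSum, Multiset.disjSum,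
    Multiset.map_add, Multiset.map_map, Multiset.map_map] at h
  convert h using 2
  · refine Multiset.map_congr rfl (fun a _ => ?_)
    show Nat.card {u | G.Adj a u} = Nat.card {u | (sumGraph G H).Adj (.inl a) u}
    have : {u | (sumGraph G H).Adj (.inl a) u} = Sum.inl '' {b | G.Adj a b} := by
      ext (b|b) <;> simp [sumGraph]
    rw [this, Nat.card_image_of_injective Sum.inl_injective]
  · refine Multiset.map_congr rfl (fun a _ => ?_)
    show Nat.card {u | H.Adj a u} = Nat.card {u | (sumGraph G H).Adj (.inr a) u}
    have : {u | (sumGraph G H).Adj (.inr a) u} = Sum.inr '' {b | H.Adj a b} := by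
      ext (b|b) <;> simp [sumGraph]
    rw [this, Nat.card_image_of_injective Sum.inr_injective]

lemma degMultiset_step (a b c d : ℕ) :
    degMultiset (a+2) (b+2) (c+2) (d+2) = degMultiset a b c d + degMultiset 2 2 2 2 := by
  simp only [degMultiset, Multiset.replicate_add]
  abel

/-- For every `k ≥ 2`, each of the sequences `(1^k,2^k,3^k,4^k)`,
`(1^k,2^k,3^k,4^{k+1})`, `(1^k,2^{k−1},3^k,4^k)`, `(1^k,2^{k+1},3^k,4^{k+1})`
and `(1^{k+1},2^k,3^{k+1},4^k)` is graphical. -/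
theorem stmt_18 (k : ℕ) (hk : 2 ≤ k) :
    IsGraphical (degMultiset k k k k) ∧
    IsGraphical (degMultiset k k k (k + 1)) ∧
    IsGraphical (degMultiset k (k - 1) k k) ∧
    IsGraphical (degMultiset k (k + 1) k (k + 1)) ∧
    IsGraphical (degMultiset (k + 1) k (k + 1) k) := by
  obtain ⟨n, rfl⟩ : ∃ n, k = n + 2 := ⟨k - 2, by omega⟩
  rw [show n + 2 - 1 = n + 1 from by omega]
  clear hk
  induction n using Nat.twoStepInduction with
  | zero =>
    exact ⟨baseA2, baseB2, baseC2, baseD2, baseE2⟩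
  | one =>
    exact ⟨baseA3, baseB3, baseC3, baseD3, baseE3⟩
  | more n ih _ =>
    obtain ⟨h1, h2, h3, h4, h5⟩ := ih
    refine ⟨?_, ?_, ?_, ?_, ?_⟩
    · rw [degMultiset_step]; exact h1.add baseA2
    · rw [show n + 2 + 2 + 1 = (n + 2 + 1) + 2 from by omega, degMultiset_step]
      exact h2.add baseA2
    · rw [show n + 2 + 1 = (n + 1) + 2 from by omega, degMultiset_step]
      exact h3.add baseA2
    · rw [show n + 2 + 2 + 1 = (n + 2 + 1) + 2 from by omega, degMultiset_step]
      exact h4.add baseA2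
    · rw [show n + 2 + 2 + 1 = (n + 2 + 1) + 2 from by omega, degMultiset_step]
      exact h5.add baseA2
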